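/- Let h : [0,t+ε] → [h_min, h_max] ⊂ (0,1) be measurable, and define for small ε ∈ (0,1] the quantity N = ∫_t^{t+ε} 2h(s)(t+ε−s)^{2h(s)−1} ds and H₋ = inf_{s∈[t,t+ε]} h(s), H₊ = sup_{s∈[t,t+ε]} h(s). Then (h_min/h_max) ε^{2H₊} ≤ N ≤ (h_max/h_min) ε^{2H₋}. -/

import Mathlib

open MeasureTheory Set Real

lemma aux_rpow_integral (a b p : ℝ) (hab : a < b) (hp : -1 < p) :
    IntegrableOn (fun s => (b - s) ^ p) (Set.Ioo a b) volume ∧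
      (∫ s in Set.Ioo a b, (b - s) ^ p) = (b - a) ^ (p + 1) / (p + 1) := by
  have hii : IntervalIntegrable (fun s => (b - s) ^ p) volume a b := by
    have := (intervalIntegral.intervalIntegrable_rpow' hp (a := b - a) (b := b - b)).comp_sub_left b
    simpa using this
  have hIoc : IntegrableOn (fun s => (b - s) ^ p) (Set.Ioc a b) volume :=
    (intervalIntegrable_iff_integrableOn_Ioc_of_le hab.le).mp hii
  constructor
  · exact hIoc.mono_set Set.Ioo_subset_Ioc_self
  · have h1 : (∫ s in Set.Ioo a b, (b - s) ^ p) = ∫ s in a..b, (b - s) ^ p := by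
      rw [intervalIntegral.integral_of_le hab.le, MeasureTheory.integral_Ioc_eq_integral_Ioo]
    rw [h1, intervalIntegral.integral_comp_sub_left (fun x => x ^ p) b, sub_self,
      integral_rpow (Or.inl hp)]
    rw [Real.zero_rpow (by linarith)]
    ring

/-- Pathwise kernel norm scaling: with extremal indices
`H₋ = inf h, H₊ = sup h` over `[t, t+ε]`,
`(h_min/h_max) ε^(2H₊) ≤ ∫_t^{t+ε} 2h(s)(t+ε-s)^(2h(s)-1) ds ≤ (h_max/h_min) ε^(2H₋)`. -/
theorem stmt15 (hmin hmax t ε : ℝ) (h0 : 0 < hmin) (h1 : hmin ≤ hmax) (h2 : hmax < 1)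
    (ht : 0 ≤ t) (hε : ε ∈ Set.Ioc (0:ℝ) 1)
    (h : ℝ → ℝ) (hmeas : Measurable h)
    (hrange : ∀ s ∈ Set.Icc t (t + ε), h s ∈ Set.Icc hmin hmax) :
    (hmin / hmax) * ε ^ (2 * sSup (h '' Set.Icc t (t + ε))) ≤
        (∫ s in Set.Ioo t (t + ε), 2 * h s * (t + ε - s) ^ (2 * h s - 1)) ∧
      (∫ s in Set.Ioo t (t + ε), 2 * h s * (t + ε - s) ^ (2 * h s - 1)) ≤
        (hmax / hmin) * ε ^ (2 * sInf (h '' Set.Icc t (t + ε))) := by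
  obtain ⟨hε0, hε1⟩ := hε
  have htlt : t < t + ε := by linarith
  set Hp := sSup (h '' Set.Icc t (t + ε)) with hHp
  set Hm := sInf (h '' Set.Icc t (t + ε)) with hHm
  have hne : (h '' Set.Icc t (t + ε)).Nonempty :=
    ⟨h t, Set.mem_image_of_mem h (Set.left_mem_Icc.mpr htlt.le)⟩
  have hbdd : BddAbove (h '' Set.Icc t (t + ε)) := by
    refine ⟨hmax, fun x hx => ?_⟩
    obtain ⟨s, hs, rfl⟩ := hx; exact (hrange s hs).2
  have hbddb : BddBelow (h '' Set.Icc t (t + ε)) := by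
    refine ⟨hmin, fun x hx => ?_⟩
    obtain ⟨s, hs, rfl⟩ := hx; exact (hrange s hs).1
  have hHp_le : Hp ≤ hmax := csSup_le hne (fun x hx => by
    obtain ⟨s, hs, rfl⟩ := hx; exact (hrange s hs).2)
  have hHm_ge : hmin ≤ Hm := le_csInf hne (fun x hx => by
    obtain ⟨s, hs, rfl⟩ := hx; exact (hrange s hs).1)
  have hHp_ge : hmin ≤ Hp := le_trans hHm_ge (csInf_le_csSup hne hbddb hbdd)
  have hHm_le : Hm ≤ hmax := le_trans (csInf_le_csSup hne hbddb hbdd) hHp_le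
  have hHp0 : 0 < Hp := lt_of_lt_of_le h0 hHp_ge
  have hHm0 : 0 < Hm := lt_of_lt_of_le h0 hHm_ge
  -- pointwise bounds
  have key : ∀ s ∈ Set.Ioo t (t + ε),
      2 * hmin * (t + ε - s) ^ (2 * Hp - 1) ≤ 2 * h s * (t + ε - s) ^ (2 * h s - 1) ∧
      2 * h s * (t + ε - s) ^ (2 * h s - 1) ≤ 2 * hmax * (t + ε - s) ^ (2 * Hm - 1) := by
    intro s hs
    have hsIcc : s ∈ Set.Icc t (t + ε) := Set.Ioo_subset_Icc_self hs
    have hu0 : 0 < t + ε - s := by linarith [hs.2]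
    have hu1 : t + ε - s ≤ 1 := by linarith [hs.1]
    have hhs := hrange s hsIcc
    have hle : h s ≤ Hp := le_csSup hbdd (Set.mem_image_of_mem h hsIcc)
    have hge : Hm ≤ h s := csInf_le hbddb (Set.mem_image_of_mem h hsIcc)
    constructor
    · apply mul_le_mul (by linarith)
        (Real.rpow_le_rpow_of_exponent_ge hu0 hu1 (by linarith))
        (Real.rpow_nonneg hu0.le _) (by linarith)
    · apply mul_le_mul (by linarith)
        (Real.rpow_le_rpow_of_exponent_ge hu0 hu1 (by linarith))
        (Real.rpow_nonneg hu0.le _) (by linarith)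
  -- integrability
  have hmeasf : AEStronglyMeasurable
      (fun s => 2 * h s * (t + ε - s) ^ (2 * h s - 1))
      (volume.restrict (Set.Ioo t (t + ε))) := by
    apply Measurable.aestronglyMeasurable
    exact ((measurable_const.mul hmeas).mul
      ((measurable_const.sub measurable_id).pow
        ((measurable_const.mul hmeas).sub measurable_const)))
  obtain ⟨hint_m, hval_m⟩ := aux_rpow_integral t (t + ε) (2 * Hm - 1) htlt (by linarith)
  obtain ⟨hint_p, hval_p⟩ := aux_rpow_integral t (t + ε) (2 * Hp - 1) htlt (by linarith)
  have hintf : IntegrableOn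
      (fun s => 2 * h s * (t + ε - s) ^ (2 * h s - 1)) (Set.Ioo t (t + ε)) volume := by
    apply Integrable.mono ((hint_m.const_mul (2 * hmax)))
    · exact hmeasf
    · rw [ae_restrict_iff' measurableSet_Ioo]
      filter_upwards with s hs
      have hu0 : 0 < t + ε - s := by linarith [hs.2]
      have h2' := (key s hs).2
      have hhs1 := (hrange s (Set.Ioo_subset_Icc_self hs)).1
      have hf0 : 0 ≤ 2 * h s * (t + ε - s) ^ (2 * h s - 1) :=
        mul_nonneg (by linarith) (Real.rpow_nonneg hu0.le _)
      have hg0 : 0 ≤ 2 * hmax * (t + ε - s) ^ (2 * Hm - 1) :=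
        mul_nonneg (by linarith) (Real.rpow_nonneg hu0.le _)
      rw [Real.norm_of_nonneg hf0, Real.norm_of_nonneg hg0]
      exact h2'
  have hintlo : IntegrableOn
      (fun s => 2 * hmin * (t + ε - s) ^ (2 * Hp - 1)) (Set.Ioo t (t + ε)) volume :=
    hint_p.const_mul _
  have hinthi : IntegrableOn
      (fun s => 2 * hmax * (t + ε - s) ^ (2 * Hm - 1)) (Set.Ioo t (t + ε)) volume :=
    hint_m.const_mul _
  have hεrw : t + ε - t = ε := by ring
  have hεp : (2 * Hp - 1) + 1 = 2 * Hp := by ring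
  have hεm : (2 * Hm - 1) + 1 = 2 * Hm := by ring
  have hlo_val : (∫ s in Set.Ioo t (t + ε), 2 * hmin * (t + ε - s) ^ (2 * Hp - 1))
      = 2 * hmin * (ε ^ (2 * Hp) / (2 * Hp)) := by
    rw [MeasureTheory.integral_const_mul, hval_p, hεrw, hεp]
  have hhi_val : (∫ s in Set.Ioo t (t + ε), 2 * hmax * (t + ε - s) ^ (2 * Hm - 1))
      = 2 * hmax * (ε ^ (2 * Hm) / (2 * Hm)) := by
    rw [MeasureTheory.integral_const_mul, hval_m, hεrw, hεm]
  have hεHp : (0:ℝ) ≤ ε ^ (2 * Hp) := Real.rpow_nonneg hε0.le _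
  have hεHm : (0:ℝ) ≤ ε ^ (2 * Hm) := Real.rpow_nonneg hε0.le _
  constructor
  · calc hmin / hmax * ε ^ (2 * Hp) ≤ hmin / Hp * ε ^ (2 * Hp) := by
          gcongr <;> linarith
      _ = 2 * hmin * (ε ^ (2 * Hp) / (2 * Hp)) := by
          field_simp
      _ = ∫ s in Set.Ioo t (t + ε), 2 * hmin * (t + ε - s) ^ (2 * Hp - 1) := hlo_val.symm
      _ ≤ _ := setIntegral_mono_on hintlo hintf measurableSet_Ioo (fun s hs => (key s hs).1)
  · calc (∫ s in Set.Ioo t (t + ε), 2 * h s * (t + ε - s) ^ (2 * h s - 1))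
        ≤ ∫ s in Set.Ioo t (t + ε), 2 * hmax * (t + ε - s) ^ (2 * Hm - 1) :=
          setIntegral_mono_on hintf hinthi measurableSet_Ioo (fun s hs => (key s hs).2)
      _ = 2 * hmax * (ε ^ (2 * Hm) / (2 * Hm)) := hhi_val
      _ = hmax / Hm * ε ^ (2 * Hm) := by field_simp
      _ ≤ hmax / hmin * ε ^ (2 * Hm) := by gcongr <;> linarith
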